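/- Let L : ℝ^{n₁} × ℝ^{n₂} → ℝ be twice differentiable and invariant under all α-scale transformations, and let θ = (θ₁, θ₂) be a point where the Hessian of L is positive semi-definite and nonzero. Then for every M > 0 there exists α > 0 such that the operator norm of the Hessian of L at T_α(θ) = (αθ₁, α⁻¹θ₂) is at least M. -/

import Mathlib

/-- The parameter space `ℝ^{n₁} × ℝ^{n₂}` with the Euclidean (`ℓ²`) norm on the
concatenated vector. -/
abbrev Param (n₁ n₂ : ℕ) :=
  WithLp 2 (EuclideanSpace ℝ (Fin n₁) × EuclideanSpace ℝ (Fin n₂))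

/-- Builds a parameter from its two components. -/
noncomputable def Param.mk {n₁ n₂ : ℕ}
    (u : EuclideanSpace ℝ (Fin n₁)) (v : EuclideanSpace ℝ (Fin n₂)) :
    Param n₁ n₂ :=
  (WithLp.equiv 2 (EuclideanSpace ℝ (Fin n₁) × EuclideanSpace ℝ (Fin n₂))).symm (u, v)

noncomputable def scaleMap (n₁ n₂ : ℕ) (α : ℝ) : Param n₁ n₂ →L[ℝ] Param n₁ n₂ :=
  ((WithLp.prodContinuousLinearEquiv 2 ℝ (EuclideanSpace ℝ (Fin n₁))
      (EuclideanSpace ℝ (Fin n₂))).symm.toContinuousLinearMap).comp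
    (((α • ContinuousLinearMap.id ℝ (EuclideanSpace ℝ (Fin n₁))).prodMap
      (α⁻¹ • ContinuousLinearMap.id ℝ (EuclideanSpace ℝ (Fin n₂)))).comp
      (WithLp.prodContinuousLinearEquiv 2 ℝ _ _).toContinuousLinearMap)

example (n₁ n₂ : ℕ) (α : ℝ) (u : EuclideanSpace ℝ (Fin n₁)) (v : EuclideanSpace ℝ (Fin n₂)) :
    scaleMap n₁ n₂ α (Param.mk u v) = Param.mk (α • u) (α⁻¹ • v) := rfl

example (n₁ n₂ : ℕ) (x : Param n₁ n₂) :
    Param.mk (WithLp.equiv 2 _ x).1 (WithLp.equiv 2 _ x).2 = x := rfl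

set_option maxHeartbeats 2000000 in
set_option synthInstance.maxHeartbeats 2000000 in
instance (n₁ n₂ : ℕ) : T2Space (Param n₁ n₂ →L[ℝ] ℝ) := inferInstance

set_option maxHeartbeats 2000000 in
set_option synthInstance.maxHeartbeats 2000000 in
instance (n₁ n₂ : ℕ) : ContinuousSMul ℝ (Param n₁ n₂) := inferInstance

theorem hess_scale (n₁ n₂ : ℕ) (L : Param n₁ n₂ → ℝ)
    (hdiff : Differentiable ℝ L) (hdiff2 : Differentiable ℝ (fderiv ℝ L))
    (α : ℝ) (hLS : ∀ x, L (scaleMap n₁ n₂ α x) = L x) (x w w' : Param n₁ n₂) :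
    fderiv ℝ (fderiv ℝ L) x w w'
      = fderiv ℝ (fderiv ℝ L) (scaleMap n₁ n₂ α x) (scaleMap n₁ n₂ α w)
          (scaleMap n₁ n₂ α w') := by
  set S := scaleMap n₁ n₂ α with hS
  have hg : ∀ y, fderiv ℝ L y = (fderiv ℝ L (S y)).comp S := by
    intro y
    have h1 : L = L ∘ S := by funext z; simp [hLS z]
    conv_lhs => rw [h1]
    rw [fderiv_comp (x := y) (hdiff _) S.differentiableAt, S.fderiv]
  set pc : (Param n₁ n₂ →L[ℝ] ℝ) →L[ℝ] (Param n₁ n₂ →L[ℝ] ℝ) :=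
    (ContinuousLinearMap.compL ℝ (Param n₁ n₂) (Param n₁ n₂) ℝ).flip S with hpc
  have hg' : fderiv ℝ L = fun y => pc (fderiv ℝ L (S y)) := by
    funext y; exact hg y
  have h2 : fderiv ℝ (fderiv ℝ L) x
      = pc.comp ((fderiv ℝ (fderiv ℝ L) (S x)).comp S) := by
    conv_lhs => rw [hg']
    rw [show (fun y => pc (fderiv ℝ L (S y))) = pc ∘ ((fderiv ℝ L) ∘ S) from rfl]
    rw [fderiv_comp (x := x) pc.differentiableAt ((hdiff2.comp S.differentiable).differentiableAt),
      pc.fderiv]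
    congr 1
    rw [fderiv_comp (x := x) (hdiff2 _) S.differentiableAt, S.fderiv]
  rw [h2]; rfl

theorem opnorm_ge {n₁ n₂ : ℕ} (H : Param n₁ n₂ →L[ℝ] Param n₁ n₂ →L[ℝ] ℝ)
    {z : Param n₁ n₂} (hz : z ≠ 0) {M : ℝ} (h : M * ‖z‖ ^ 2 ≤ H z z) :
    M ≤ ‖H‖ := by
  have hz' : (0:ℝ) < ‖z‖ := norm_pos_iff.mpr hz
  have h1 : H z z ≤ ‖H‖ * ‖z‖ * ‖z‖ := by
    calc H z z ≤ |H z z| := le_abs_self _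
    _ ≤ ‖H z‖ * ‖z‖ := (H z).le_opNorm z
    _ ≤ (‖H‖ * ‖z‖) * ‖z‖ := by
        gcongr
        exact H.le_opNorm z
  rw [pow_two] at h
  nlinarith [mul_pos hz' hz']

/-- If `L` is twice differentiable, invariant under all `α`-scale
transformations, and its Hessian at `θ = (θ₁, θ₂)` is positive semi-definite
and nonzero, then for every `M > 0` there is `α > 0` such that the operator
norm of the Hessian of `L` at `T_α(θ) = (αθ₁, α⁻¹θ₂)` is at least `M`. -/
theorem hessian_operator_norm_unbounded (n₁ n₂ : ℕ) (L : Param n₁ n₂ → ℝ)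
    (hdiff : Differentiable ℝ L) (hdiff2 : Differentiable ℝ (fderiv ℝ L))
    (hinv : ∀ α : ℝ, 0 < α → ∀ (u : EuclideanSpace ℝ (Fin n₁))
      (v : EuclideanSpace ℝ (Fin n₂)),
      L (Param.mk (α • u) (α⁻¹ • v)) = L (Param.mk u v))
    (θ₁ : EuclideanSpace ℝ (Fin n₁)) (θ₂ : EuclideanSpace ℝ (Fin n₂))
    (hpsd : ∀ w : Param n₁ n₂, 0 ≤ fderiv ℝ (fderiv ℝ L) (Param.mk θ₁ θ₂) w w)
    (hnz : fderiv ℝ (fderiv ℝ L) (Param.mk θ₁ θ₂) ≠ 0)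
    (M : ℝ) (hM : 0 < M) :
    ∃ α : ℝ, 0 < α ∧
      M ≤ ‖fderiv ℝ (fderiv ℝ L) (Param.mk (α • θ₁) (α⁻¹ • θ₂))‖ := by
  set θ : Param n₁ n₂ := Param.mk θ₁ θ₂ with hθ
  set H : Param n₁ n₂ →L[ℝ] Param n₁ n₂ →L[ℝ] ℝ := fderiv ℝ (fderiv ℝ L) θ with hH
  have hsymm : ∀ a b : Param n₁ n₂, H a b = H b a := fun a b =>
    second_derivative_symmetric (fun y => (hdiff y).hasFDerivAt)
      ((hdiff2 θ).hasFDerivAt) a b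
  -- there is w with H w w > 0
  have hex : ∃ w : Param n₁ n₂, 0 < H w w := by
    by_contra hc
    push_neg at hc
    have hzero : ∀ w, H w w = 0 := fun w => le_antisymm (hc w) (hpsd w)
    apply hnz
    ext a b
    have h1 : H (a + b) (a + b) = H a a + H a b + H b a + H b b := by
      simp [map_add]; ring
    have h2 : H a b = H b a := hsymm a b
    have := hzero (a + b)
    rw [h1, hzero a, hzero b, h2] at this
    simpa using by linarith
  obtain ⟨w, hw⟩ := hex
  set u : EuclideanSpace ℝ (Fin n₁) := (WithLp.equiv 2 _ w).1 with hu
  set v : EuclideanSpace ℝ (Fin n₂) := (WithLp.equiv 2 _ w).2 with hv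
  set w₁ : Param n₁ n₂ := Param.mk u 0 with hw₁
  set w₂ : Param n₁ n₂ := Param.mk 0 v with hw₂
  have hsum : w = w₁ + w₂ := by
    show w = (WithLp.equiv 2 _).symm (u + 0, 0 + v)
    simp only [add_zero, zero_add]
    rfl
  -- one of the diagonal entries is positive
  have hdiag : 0 < H w₁ w₁ ∨ 0 < H w₂ w₂ := by
    by_contra hc
    push_neg at hc
    have e1 : H w₁ w₁ = 0 := le_antisymm hc.1 (hpsd w₁)
    have e2 : H w₂ w₂ = 0 := le_antisymm hc.2 (hpsd w₂)
    have h1 : H w w = H w₁ w₂ + H w₂ w₁ := by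
      rw [hsum]; simp [map_add, e1, e2]; ring
    have h2 : 0 ≤ H (w₁ - w₂) (w₁ - w₂) := hpsd _
    have h3 : H (w₁ - w₂) (w₁ - w₂) = -(H w₁ w₂ + H w₂ w₁) := by
      simp [map_sub, e1, e2]; ring
    rw [h3] at h2
    rw [h1] at hw
    linarith
  -- general facts about the scaled hessian
  have key : ∀ α : ℝ, 0 < α → ∀ z z' : Param n₁ n₂,
      H z z' = fderiv ℝ (fderiv ℝ L) (Param.mk (α • θ₁) (α⁻¹ • θ₂))
        (scaleMap n₁ n₂ α z) (scaleMap n₁ n₂ α z') := by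
    intro α hα z z'
    have hLS : ∀ x, L (scaleMap n₁ n₂ α x) = L x := fun x =>
      hinv α hα (WithLp.equiv 2 _ x).1 (WithLp.equiv 2 _ x).2
    exact hess_scale n₁ n₂ L hdiff hdiff2 α hLS θ z z'
  rcases hdiag with hd | hd
  · -- use small α
    have hw₁0 : w₁ ≠ 0 := by
      intro h0; rw [h0] at hd; simp at hd
    have hn1 : (0:ℝ) < ‖w₁‖ := norm_pos_iff.mpr hw₁0
    set d : ℝ := H w₁ w₁ with hdd
    set α : ℝ := Real.sqrt (d / (M * ‖w₁‖ ^ 2)) with hα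
    have hαpos : 0 < α := Real.sqrt_pos.mpr (by positivity)
    have hα2 : α ^ 2 = d / (M * ‖w₁‖ ^ 2) := Real.sq_sqrt (by positivity)
    refine ⟨α, hαpos, ?_⟩
    have hsc : scaleMap n₁ n₂ α w₁ = α • w₁ := by
      show (WithLp.equiv 2 _).symm (α • u, α⁻¹ • (0:EuclideanSpace ℝ (Fin n₂)))
        = (WithLp.equiv 2 _).symm (α • u, α • (0:EuclideanSpace ℝ (Fin n₂)))
      simp
    have hkey := key α hαpos w₁ w₁
    rw [hsc] at hkey
    set H' := fderiv ℝ (fderiv ℝ L) (Param.mk (α • θ₁) (α⁻¹ • θ₂)) with hH'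
    have hval : H' (α • w₁) (α • w₁) = α ^ 2 * H' w₁ w₁ := by
      simp [map_smul]; ring
    rw [hval] at hkey
    set X : ℝ := H' w₁ w₁ with hXdef
    have hd0 : d ≠ 0 := ne_of_gt hd
    have hαne : α ≠ 0 := ne_of_gt hαpos
    have hXval : X = M * ‖w₁‖ ^ 2 := by
      have h5 : X = d / α ^ 2 := by
        rw [hdd, hkey]; field_simp
      rw [h5, hα2, div_div_eq_mul_div, mul_comm, mul_div_assoc, div_self hd0, mul_one]
    apply opnorm_ge H' hw₁0
    rw [← hXdef, hXval]
  · -- use large α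
    have hw₂0 : w₂ ≠ 0 := by
      intro h0; rw [h0] at hd; simp at hd
    have hn2 : (0:ℝ) < ‖w₂‖ := norm_pos_iff.mpr hw₂0
    set d : ℝ := H w₂ w₂ with hdd
    set α : ℝ := Real.sqrt (M * ‖w₂‖ ^ 2 / d) with hα
    have hαpos : 0 < α := Real.sqrt_pos.mpr (by positivity)
    have hα2 : α ^ 2 = M * ‖w₂‖ ^ 2 / d := Real.sq_sqrt (by positivity)
    refine ⟨α, hαpos, ?_⟩
    have hsc : scaleMap n₁ n₂ α w₂ = α⁻¹ • w₂ := by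
      show (WithLp.equiv 2 _).symm (α • (0:EuclideanSpace ℝ (Fin n₁)), α⁻¹ • v)
        = (WithLp.equiv 2 _).symm (α⁻¹ • (0:EuclideanSpace ℝ (Fin n₁)), α⁻¹ • v)
      simp
    have hkey := key α hαpos w₂ w₂
    rw [hsc] at hkey
    set H' := fderiv ℝ (fderiv ℝ L) (Param.mk (α • θ₁) (α⁻¹ • θ₂)) with hH'
    have hval : H' (α⁻¹ • w₂) (α⁻¹ • w₂) = (α⁻¹) ^ 2 * H' w₂ w₂ := by
      simp [map_smul]; ring
    rw [hval] at hkey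
    set X : ℝ := H' w₂ w₂ with hXdef
    have hd0 : d ≠ 0 := ne_of_gt hd
    have hαne : α ≠ 0 := ne_of_gt hαpos
    have hXval : X = M * ‖w₂‖ ^ 2 := by
      have h5 : X = d * α ^ 2 := by
        rw [hdd, hkey, inv_pow]; field_simp
      rw [h5, hα2]; field_simp
    apply opnorm_ge H' hw₂0
    rw [← hXdef, hXval]
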